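/- Connes' joint distribution lemma (matrix case): Let ρ and σ be positive semidefinite n×n complex matrices and let τ be the normalized trace τ(A) = (1/n)Tr(A), with ‖A‖₂ = √(τ(A*A)). Then ∫₀^∞ ‖χ_{≥√λ}(ρ) − χ_{≥√λ}(σ)‖₂² dλ ≤ ‖ρ − σ‖₂ · ‖ρ + σ‖₂. -/

import Mathlib

open MeasureTheory Matrix ComplexOrder

/-- The spectral projection `χ_{≥t}(σ)` of a Hermitian matrix `σ` onto the
eigenvalues that are `≥ t`, defined via the spectral decomposition. -/
noncomputable def specProj {n : ℕ} {σ : Matrix (Fin n) (Fin n) ℂ}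
    (hσ : σ.IsHermitian) (t : ℝ) : Matrix (Fin n) (Fin n) ℂ :=
  (hσ.eigenvectorUnitary : Matrix (Fin n) (Fin n) ℂ) *
    Matrix.diagonal (fun i => if t ≤ hσ.eigenvalues i then (1 : ℂ) else 0) *
    (star (hσ.eigenvectorUnitary : Matrix (Fin n) (Fin n) ℂ))

/-- The Hilbert–Schmidt norm `‖A‖₂ = √(τ(A*A))` associated with the
normalized trace `τ(X) = (1/n) Tr X`. -/
noncomputable def hsNorm {n : ℕ} (A : Matrix (Fin n) (Fin n) ℂ) : ℝ :=
  Real.sqrt ((Matrix.trace (Aᴴ * A)).re / n)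

section Helpers

lemma trace_diag_conj {n : ℕ} (W : Matrix (Fin n) (Fin n) ℂ) (d e : Fin n → ℂ) :
    Matrix.trace (Matrix.diagonal d * W * Matrix.diagonal e * star W)
      = ∑ i, ∑ j, d i * e j * (W i j * star (W i j)) := by
  simp only [Matrix.trace, Matrix.diag, Matrix.mul_apply, Matrix.diagonal_apply,
    Matrix.conjTranspose_apply, ite_mul, zero_mul, Finset.sum_ite_eq, Finset.mem_univ,
    if_true, mul_ite, mul_zero, Finset.sum_ite_eq', Finset.sum_mul, Matrix.star_apply]
  exact Finset.sum_congr rfl fun i _ => Finset.sum_congr rfl fun j _ => by ring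

lemma trace_conj_diag_mul {n : ℕ} (U V : Matrix (Fin n) (Fin n) ℂ) (d e : Fin n → ℂ) :
    Matrix.trace ((U * Matrix.diagonal d * star U) * (V * Matrix.diagonal e * star V))
      = ∑ i, ∑ j, d i * e j * ((star U * V) i j * star ((star U * V) i j)) := by
  have h1 : (U * Matrix.diagonal d * star U) * (V * Matrix.diagonal e * star V)
      = U * (Matrix.diagonal d * (star U * V) * Matrix.diagonal e * star V) := by
    simp only [Matrix.mul_assoc]
  rw [h1, Matrix.trace_mul_comm]
  have h2 : Matrix.diagonal d * (star U * V) * Matrix.diagonal e * star V * U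
      = Matrix.diagonal d * (star U * V) * Matrix.diagonal e * star (star U * V) := by
    rw [StarMul.star_mul, star_star]; simp only [Matrix.mul_assoc]
  rw [h2, trace_diag_conj]

lemma re_trace_conj4 {n : ℕ} (U V : Matrix (Fin n) (Fin n) ℂ) (d e : Fin n → ℝ) :
    (Matrix.trace ((U * Matrix.diagonal (fun i => (d i : ℂ)) * star U) *
        (V * Matrix.diagonal (fun j => (e j : ℂ)) * star V))).re
      = ∑ i, ∑ j, d i * e j * Complex.normSq ((star U * V) i j) := by
  rw [trace_conj_diag_mul]
  simp only [RCLike.star_def, Complex.mul_conj, Complex.re_sum]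
  simp

lemma row_sum_normSq {n : ℕ} {W : Matrix (Fin n) (Fin n) ℂ} (h : W * star W = 1) (i : Fin n) :
    ∑ j, Complex.normSq (W i j) = 1 := by
  have h2 := congrArg (fun M : Matrix (Fin n) (Fin n) ℂ => (M i i).re) h
  simpa [Matrix.mul_apply, Matrix.conjTranspose_apply, Matrix.one_apply, RCLike.star_def,
    Complex.mul_conj, Complex.re_sum] using h2

lemma col_sum_normSq {n : ℕ} {W : Matrix (Fin n) (Fin n) ℂ} (h : star W * W = 1) (j : Fin n) :
    ∑ i, Complex.normSq (W i j) = 1 := by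
  have h2 := congrArg (fun M : Matrix (Fin n) (Fin n) ℂ => (M j j).re) h
  simpa [Matrix.mul_apply, Matrix.conjTranspose_apply, Matrix.one_apply, RCLike.star_def,
    Complex.mul_conj, mul_comm, Complex.re_sum] using h2

lemma conj_diag_herm {n : ℕ} (U : Matrix (Fin n) (Fin n) ℂ) (d : Fin n → ℝ) :
    (U * Matrix.diagonal (fun i => (d i : ℂ)) * star U)ᴴ
      = U * Matrix.diagonal (fun i => (d i : ℂ)) * star U := by
  simp only [Matrix.star_eq_conjTranspose, Matrix.conjTranspose_mul,
    Matrix.conjTranspose_conjTranspose, Matrix.diagonal_conjTranspose]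
  have : star (fun i => (d i : ℂ)) = fun i => (d i : ℂ) := by
    funext i; simp [Pi.star_apply, RCLike.star_def, Complex.conj_ofReal]
  rw [this, Matrix.mul_assoc]

lemma re_trace_sub_sq {n : ℕ} {U V : Matrix (Fin n) (Fin n) ℂ}
    (hU : star U * U = 1) (hU' : U * star U = 1)
    (hV : star V * V = 1) (hV' : V * star V = 1) (d e : Fin n → ℝ) :
    (Matrix.trace (((U * Matrix.diagonal (fun i => (d i : ℂ)) * star U)
          - (V * Matrix.diagonal (fun j => (e j : ℂ)) * star V))ᴴ *
        ((U * Matrix.diagonal (fun i => (d i : ℂ)) * star U)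
          - (V * Matrix.diagonal (fun j => (e j : ℂ)) * star V)))).re
      = ∑ i, ∑ j, Complex.normSq ((star U * V) i j) * (d i - e j)^2 := by
  set P := U * Matrix.diagonal (fun i => (d i : ℂ)) * star U with hP
  set Q := V * Matrix.diagonal (fun j => (e j : ℂ)) * star V with hQ
  set W := star U * V with hW
  have hPherm : Pᴴ = P := conj_diag_herm U d
  have hQherm : Qᴴ = Q := conj_diag_herm V e
  have hexp : (P - Q)ᴴ * (P - Q) = P * P + Q * Q - (P * Q + Q * P) := by
    rw [Matrix.conjTranspose_sub, hPherm, hQherm]; noncomm_ring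
  rw [hexp, Matrix.trace_sub, Matrix.trace_add, Matrix.trace_add, Complex.sub_re,
    Complex.add_re, Complex.add_re]
  rw [hP, hQ, re_trace_conj4 U U d d, re_trace_conj4 V V e e, re_trace_conj4 U V d e,
    re_trace_conj4 V U e d]
  have hdd : ∑ i, ∑ j, d i * d j * Complex.normSq ((star U * U) i j) = ∑ i, d i ^ 2 := by
    rw [hU]
    simp [Matrix.one_apply, apply_ite Complex.normSq, Finset.sum_ite_eq', sq]
  have hee : ∑ i, ∑ j, e i * e j * Complex.normSq ((star V * V) i j) = ∑ j, e j ^ 2 := by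
    rw [hV]
    simp [Matrix.one_apply, apply_ite Complex.normSq, Finset.sum_ite_eq', sq]
  have hVU : star V * U = star W := by rw [hW, StarMul.star_mul, star_star]
  have hed : ∑ i, ∑ j, e i * d j * Complex.normSq ((star V * U) i j)
      = ∑ i, ∑ j, d i * e j * Complex.normSq (W i j) := by
    rw [hVU, Finset.sum_comm]
    refine Finset.sum_congr rfl fun i _ => Finset.sum_congr rfl fun j _ => ?_
    rw [Matrix.star_eq_conjTranspose, Matrix.conjTranspose_apply]
    simp [RCLike.star_def, Complex.normSq_conj, mul_comm]
  rw [hdd, hee, hed]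
  have hWW : W * star W = 1 := by
    rw [hW, StarMul.star_mul, star_star, Matrix.mul_assoc, ← Matrix.mul_assoc V, hV', one_mul, hU]
  have hWW' : star W * W = 1 := by
    rw [hW, StarMul.star_mul, star_star, Matrix.mul_assoc, ← Matrix.mul_assoc U, hU', one_mul, hV]
  have hA : ∑ i, d i ^ 2 = ∑ i, ∑ j, Complex.normSq (W i j) * d i ^ 2 := by
    refine Finset.sum_congr rfl fun i _ => ?_
    rw [← Finset.sum_mul, row_sum_normSq hWW i, one_mul]
  have hB : ∑ j, e j ^ 2 = ∑ i, ∑ j, Complex.normSq (W i j) * e j ^ 2 := by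
    rw [Finset.sum_comm]
    refine Finset.sum_congr rfl fun j _ => ?_
    rw [← Finset.sum_mul, col_sum_normSq hWW' j, one_mul]
  rw [hA, hB]
  simp only [← hW, ← two_mul, ← Finset.sum_add_distrib, Finset.mul_sum, ← Finset.sum_sub_distrib]
  exact Finset.sum_congr rfl fun i _ => Finset.sum_congr rfl fun j _ => by ring

lemma re_trace_conjTranspose_mul_self_nonneg {n : ℕ} (A : Matrix (Fin n) (Fin n) ℂ) :
    0 ≤ (Matrix.trace (Aᴴ * A)).re := by
  simp only [Matrix.trace, Matrix.diag, Matrix.mul_apply, Matrix.conjTranspose_apply,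
    RCLike.star_def, Complex.re_sum]
  refine Finset.sum_nonneg fun j _ => Finset.sum_nonneg fun i _ => ?_
  simp only [Complex.mul_re, Complex.conj_re, Complex.conj_im]
  nlinarith [sq_nonneg (A i j).re, sq_nonneg (A i j).im]

lemma connes_pointwise {a b : ℝ} (ha : 0 ≤ a) (hb : 0 ≤ b) {l : ℝ} (hl : l ∈ Set.Ioi (0:ℝ)) :
    ((if Real.sqrt l ≤ a then (1:ℝ) else 0) - (if Real.sqrt l ≤ b then 1 else 0))^2
      = Set.indicator (Set.Ioc (min (a^2) (b^2)) (max (a^2) (b^2))) (fun _ => (1:ℝ)) l := by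
  simp only [Real.sqrt_le_left ha, Real.sqrt_le_left hb]
  simp only [Set.indicator_apply, Set.mem_Ioc, le_max_iff, min_lt_iff]
  rcases le_or_gt l (a^2) with h1 | h1 <;> rcases le_or_gt l (b^2) with h2 | h2
  · rw [if_pos h1, if_pos h2, if_neg]; · norm_num
    rintro ⟨h | h, -⟩ <;> linarith
  · rw [if_pos h1, if_neg (not_le.2 h2), if_pos ⟨Or.inr h2, Or.inl h1⟩]; norm_num
  · rw [if_neg (not_le.2 h1), if_pos h2, if_pos ⟨Or.inl h1, Or.inr h2⟩]; norm_num
  · rw [if_neg (not_le.2 h1), if_neg (not_le.2 h2), if_neg]; · norm_num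
    rintro ⟨-, h | h⟩ <;> linarith

lemma connes_indicator_integral (a b : ℝ) :
    ∫ l in Set.Ioi (0:ℝ),
        Set.indicator (Set.Ioc (min (a^2) (b^2)) (max (a^2) (b^2))) (fun _ => (1:ℝ)) l
      = |a^2 - b^2| := by
  rw [setIntegral_indicator (measurableSet_Ioc)]
  have hsub : Set.Ioi (0:ℝ) ∩ Set.Ioc (min (a^2) (b^2)) (max (a^2) (b^2))
      = Set.Ioc (min (a^2) (b^2)) (max (a^2) (b^2)) := by
    apply Set.inter_eq_self_of_subset_right
    intro x hx
    have : (0:ℝ) ≤ min (a^2) (b^2) := le_min (sq_nonneg a) (sq_nonneg b)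
    exact lt_of_le_of_lt this hx.1
  rw [hsub, setIntegral_const, measureReal_def, Real.volume_Ioc, smul_eq_mul, mul_one,
    ENNReal.toReal_ofReal (by simp [le_max_iff, min_le_iff, le_total]), max_sub_min_eq_abs,
    abs_sub_comm]

lemma connes_indicator_integrable (a b c : ℝ) :
    Integrable (fun l => c *
        Set.indicator (Set.Ioc (min (a^2) (b^2)) (max (a^2) (b^2))) (fun _ => (1:ℝ)) l)
      (volume.restrict (Set.Ioi (0:ℝ))) := by
  refine Integrable.const_mul ?_ c
  rw [integrable_indicator_iff measurableSet_Ioc]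
  refine integrableOn_const (ne_of_lt ?_)
  exact lt_of_le_of_lt (Measure.restrict_apply_le _ _) measure_Ioc_lt_top

end Helpers

/-- Connes' joint distribution lemma, matrix case: for positive
semidefinite `ρ, σ`,
`∫₀^∞ ‖χ_{≥√λ}(ρ) − χ_{≥√λ}(σ)‖₂² dλ ≤ ‖ρ − σ‖₂ ‖ρ + σ‖₂`. -/
theorem connes_joint_distribution {n : ℕ} (ρ σ : Matrix (Fin n) (Fin n) ℂ)
    (hρ : ρ.PosSemidef) (hσ : σ.PosSemidef) :
    ∫ l in Set.Ioi (0 : ℝ),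
        (hsNorm (specProj hρ.1 (Real.sqrt l) - specProj hσ.1 (Real.sqrt l))) ^ 2
      ≤ hsNorm (ρ - σ) * hsNorm (ρ + σ) := by
  classical
  set U := (hρ.1.eigenvectorUnitary : Matrix (Fin n) (Fin n) ℂ) with hUdef
  set V := (hσ.1.eigenvectorUnitary : Matrix (Fin n) (Fin n) ℂ) with hVdef
  set a := hρ.1.eigenvalues with hadef
  set b := hσ.1.eigenvalues with hbdef
  have hU : star U * U = 1 := Matrix.mem_unitaryGroup_iff'.mp hρ.1.eigenvectorUnitary.2
  have hU' : U * star U = 1 := Matrix.mem_unitaryGroup_iff.mp hρ.1.eigenvectorUnitary.2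
  have hV : star V * V = 1 := Matrix.mem_unitaryGroup_iff'.mp hσ.1.eigenvectorUnitary.2
  have hV' : V * star V = 1 := Matrix.mem_unitaryGroup_iff.mp hσ.1.eigenvectorUnitary.2
  have ha : ∀ i, 0 ≤ a i := fun i => hρ.eigenvalues_nonneg i
  have hb : ∀ j, 0 ≤ b j := fun j => hσ.eigenvalues_nonneg j
  set w : Fin n → Fin n → ℝ := fun i j => Complex.normSq ((star U * V) i j) with hwdef
  have hw : ∀ i j, 0 ≤ w i j := fun i j => Complex.normSq_nonneg _
  -- spectral decompositions with explicit real casts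
  have hρspec : ρ = U * Matrix.diagonal (fun i => ((a i : ℝ) : ℂ)) * star U :=
    hρ.1.spectral_theorem
  have hσspec : σ = V * Matrix.diagonal (fun j => ((b j : ℝ) : ℂ)) * star V :=
    hσ.1.spectral_theorem
  -- Step 1: hsNorm (ρ - σ) and hsNorm (ρ + σ)
  set S1 := ∑ i, ∑ j, w i j * (a i - b j)^2 with hS1def
  set S2 := ∑ i, ∑ j, w i j * (a i + b j)^2 with hS2def
  have h1 : hsNorm (ρ - σ) = Real.sqrt (S1 / n) := by
    rw [hsNorm]
    congr 1
    rw [hρspec, hσspec, re_trace_sub_sq hU hU' hV hV' a b]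
  have h2 : hsNorm (ρ + σ) = Real.sqrt (S2 / n) := by
    rw [hsNorm]
    congr 1
    have hplus : ρ + σ = (U * Matrix.diagonal (fun i => ((a i : ℝ) : ℂ)) * star U)
        - (V * Matrix.diagonal (fun j => (((fun j => -(b j)) j : ℝ) : ℂ)) * star V) := by
      rw [hρspec, hσspec]
      have hfun : (fun j => ((-(b j) : ℝ) : ℂ)) = fun j => -((b j : ℝ) : ℂ) := by
        funext j; push_cast; ring
      have hdneg : Matrix.diagonal (fun j => -((b j : ℝ) : ℂ))
          = -Matrix.diagonal (fun j => ((b j : ℝ) : ℂ)) := by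
        ext i j
        by_cases h : i = j <;> simp [Matrix.diagonal_apply, h]
      rw [hfun, hdneg, Matrix.mul_neg, Matrix.neg_mul, sub_neg_eq_add]
    rw [hplus, re_trace_sub_sq hU hU' hV hV' a (fun j => -(b j)), hS2def]
    refine congrArg (· / (n:ℝ)) ?_
    exact Finset.sum_congr rfl fun i _ => Finset.sum_congr rfl fun j _ => by rw [hwdef]; ring
  -- Step 2: pointwise formula for the integrand
  have h3 : ∀ t : ℝ, (hsNorm (specProj hρ.1 t - specProj hσ.1 t))^2
      = (∑ i, ∑ j, w i j *
          ((if t ≤ a i then (1:ℝ) else 0) - (if t ≤ b j then (1:ℝ) else 0))^2) / n := by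
    intro t
    have hspecρ : specProj hρ.1 t
        = U * Matrix.diagonal (fun i => (((if t ≤ a i then (1:ℝ) else 0) : ℝ) : ℂ)) * star U := by
      have hfa : (fun i => if t ≤ a i then (1:ℂ) else 0)
          = fun i => (((if t ≤ a i then (1:ℝ) else 0) : ℝ) : ℂ) := by
        funext i; by_cases h : t ≤ a i <;> simp [h]
      rw [specProj, ← hadef, hfa, ← hUdef]
    have hspecσ : specProj hσ.1 t
        = V * Matrix.diagonal (fun j => (((if t ≤ b j then (1:ℝ) else 0) : ℝ) : ℂ)) * star V := by
      have hfb : (fun j => if t ≤ b j then (1:ℂ) else 0)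
          = fun j => (((if t ≤ b j then (1:ℝ) else 0) : ℝ) : ℂ) := by
        funext j; by_cases h : t ≤ b j <;> simp [h]
      rw [specProj, ← hbdef, hfb, ← hVdef]
    rw [hsNorm, Real.sq_sqrt (div_nonneg (re_trace_conjTranspose_mul_self_nonneg _)
      (Nat.cast_nonneg n))]
    rw [hspecρ, hspecσ,
      re_trace_sub_sq hU hU' hV hV' (fun i => if t ≤ a i then (1:ℝ) else 0)
        (fun j => if t ≤ b j then (1:ℝ) else 0)]
  -- Step 3: compute the integral
  have key : (∫ l in Set.Ioi (0 : ℝ),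
        (hsNorm (specProj hρ.1 (Real.sqrt l) - specProj hσ.1 (Real.sqrt l))) ^ 2)
      = ∑ p : Fin n × Fin n, (w p.1 p.2 / n) * |(a p.1)^2 - (b p.2)^2| := by
    have hcong : ∀ l ∈ Set.Ioi (0:ℝ),
        (hsNorm (specProj hρ.1 (Real.sqrt l) - specProj hσ.1 (Real.sqrt l))) ^ 2
        = ∑ p : Fin n × Fin n, (w p.1 p.2 / n) *
            Set.indicator (Set.Ioc (min ((a p.1)^2) ((b p.2)^2))
              (max ((a p.1)^2) ((b p.2)^2))) (fun _ => (1:ℝ)) l := by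
      intro l hl
      rw [h3 (Real.sqrt l), Fintype.sum_prod_type]
      rw [Finset.sum_div]
      refine Finset.sum_congr rfl fun i _ => ?_
      rw [Finset.sum_div]
      refine Finset.sum_congr rfl fun j _ => ?_
      rw [mul_div_assoc, div_mul_eq_mul_div, ← connes_pointwise (ha i) (hb j) hl,
        mul_div_assoc]
    rw [setIntegral_congr_fun measurableSet_Ioi hcong]
    rw [integral_finset_sum _ (fun p _ => connes_indicator_integrable (a p.1) (b p.2) _)]
    refine Finset.sum_congr rfl fun p _ => ?_
    rw [integral_const_mul, connes_indicator_integral]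
  rw [key, h1, h2]
  -- Step 4: Cauchy-Schwarz
  calc ∑ p : Fin n × Fin n, (w p.1 p.2 / n) * |(a p.1)^2 - (b p.2)^2|
      = ∑ p : Fin n × Fin n, (Real.sqrt (w p.1 p.2 / n) * |a p.1 - b p.2|) *
          (Real.sqrt (w p.1 p.2 / n) * (a p.1 + b p.2)) := by
        refine Finset.sum_congr rfl fun p _ => ?_
        have habs : |(a p.1)^2 - (b p.2)^2| = |a p.1 - b p.2| * (a p.1 + b p.2) := by
          rw [show (a p.1)^2 - (b p.2)^2 = (a p.1 - b p.2) * (a p.1 + b p.2) by ring,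
            abs_mul, abs_of_nonneg (add_nonneg (ha p.1) (hb p.2))]
        have hcc : Real.sqrt (w p.1 p.2 / n) * Real.sqrt (w p.1 p.2 / n) = w p.1 p.2 / n :=
          Real.mul_self_sqrt (div_nonneg (hw p.1 p.2) (Nat.cast_nonneg n))
        have hre : (Real.sqrt (w p.1 p.2 / n) * |a p.1 - b p.2|) *
            (Real.sqrt (w p.1 p.2 / n) * (a p.1 + b p.2))
            = (Real.sqrt (w p.1 p.2 / n) * Real.sqrt (w p.1 p.2 / n)) *
              (|a p.1 - b p.2| * (a p.1 + b p.2)) := by ring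
        rw [habs, hre, hcc]
    _ ≤ Real.sqrt (∑ p : Fin n × Fin n, (Real.sqrt (w p.1 p.2 / n) * |a p.1 - b p.2|)^2) *
          Real.sqrt (∑ p : Fin n × Fin n, (Real.sqrt (w p.1 p.2 / n) * (a p.1 + b p.2))^2) :=
        Real.sum_mul_le_sqrt_mul_sqrt _ _ _
    _ = Real.sqrt (S1 / n) * Real.sqrt (S2 / n) := by
        congr 1
        · congr 1
          rw [hS1def, Fintype.sum_prod_type, Finset.sum_div]
          refine Finset.sum_congr rfl fun i _ => ?_
          rw [Finset.sum_div]
          refine Finset.sum_congr rfl fun j _ => ?_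
          rw [mul_pow, Real.sq_sqrt (div_nonneg (hw i j) (Nat.cast_nonneg n)), sq_abs]
          ring
        · congr 1
          rw [hS2def, Fintype.sum_prod_type, Finset.sum_div]
          refine Finset.sum_congr rfl fun i _ => ?_
          rw [Finset.sum_div]
          refine Finset.sum_congr rfl fun j _ => ?_
          rw [mul_pow, Real.sq_sqrt (div_nonneg (hw i j) (Nat.cast_nonneg n))]
          ring
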